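/- arXiv:2311.16178 — 6 statements merged into one kernel-verified Lean document; each statement's English description precedes it below -/
import Mathlib

section
/- If f(z)=z+a₂z²+a₃z³+⋯ is univalent on the unit disc, then the function f₂(z)=√(f(z²)) (choosing the branch with f₂(z)=z+O(z³)) is an odd univalent function on the unit disc of the form f₂(z)=z+c₃z³+c₅z⁵+⋯. -/
open Metric Topology Filter

theorem stmt_2 (f : ℂ → ℂ) (hA : AnalyticOn ℂ f (Metric.ball 0 1))
    (hI : Set.InjOn f (Metric.ball 0 1))
    (hf0 : f 0 = 0) (hf1 : deriv f 0 = 1)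
    (f₂ : ℂ → ℂ) (hA₂ : AnalyticOn ℂ f₂ (Metric.ball 0 1))
    (hsq : ∀ z ∈ Metric.ball (0:ℂ) 1, (f₂ z) ^ 2 = f (z ^ 2))
    (hd₂ : deriv f₂ 0 = 1) :
    Set.InjOn f₂ (Metric.ball 0 1) ∧
    (∀ z ∈ Metric.ball (0:ℂ) 1, f₂ (-z) = -f₂ z) ∧
    ∃ c : ℕ → ℂ, c 0 = 0 ∧ c 1 = 1 ∧ (∀ n, c (2 * n) = 0) ∧
      ∀ z ∈ Metric.ball (0:ℂ) 1, HasSum (fun n => c n * z ^ n) (f₂ z) := by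
  have hball : (0:ℂ) ∈ Metric.ball (0:ℂ) 1 := by simp
  have hN₂ : AnalyticOnNhd ℂ f₂ (Metric.ball 0 1) :=
    (Metric.isOpen_ball.analyticOn_iff_analyticOnNhd).1 hA₂
  have hmemneg : ∀ z : ℂ, z ∈ Metric.ball (0:ℂ) 1 → -z ∈ Metric.ball (0:ℂ) 1 := by
    intro z hz; simpa [mem_ball_zero_iff] using mem_ball_zero_iff.1 hz
  have hmemsq : ∀ z : ℂ, z ∈ Metric.ball (0:ℂ) 1 → z ^ 2 ∈ Metric.ball (0:ℂ) 1 := by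
    intro z hz
    rw [mem_ball_zero_iff] at hz ⊢
    calc ‖z ^ 2‖ = ‖z‖ ^ 2 := by simp
    _ < 1 := by nlinarith [norm_nonneg z]
  have h20 : f₂ 0 = 0 := by
    have h := hsq 0 hball
    simp [hf0] at h
    exact h
  -- analyticity of z ↦ f₂ (-z)
  have hNneg : AnalyticOnNhd ℂ (fun z => f₂ (-z)) (Metric.ball 0 1) := by
    intro z hz
    exact (hN₂ (-z) (hmemneg z hz)).comp (analyticAt_id.neg)
  -- the product vanishes
  have hprod : ∀ z ∈ Metric.ball (0:ℂ) 1, (f₂ z + f₂ (-z)) * (f₂ z - f₂ (-z)) = 0 := by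
    intro z hz
    have h1 := hsq z hz
    have h2 := hsq (-z) (hmemneg z hz)
    have : (-z) ^ 2 = z ^ 2 := by ring
    rw [this] at h2
    linear_combination h1 - h2
  -- oddness
  have hodd : ∀ z ∈ Metric.ball (0:ℂ) 1, f₂ (-z) = -f₂ z := by
    have hg : AnalyticAt ℂ (fun z => f₂ z + f₂ (-z)) 0 := (hN₂ 0 hball).add (hNneg 0 hball)
    rcases hg.eventually_eq_zero_or_eventually_ne_zero with hev | hne
    · -- identity principle on the ball
      have hEq : Set.EqOn (fun z => f₂ z + f₂ (-z)) 0 (Metric.ball 0 1) :=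
        (hN₂.add hNneg).eqOn_zero_of_preconnected_of_eventuallyEq_zero
          (convex_ball (0:ℂ) 1).isPreconnected hball hev
      intro z hz
      have := hEq hz
      simp only [Pi.zero_apply] at this
      linear_combination this
    · exfalso
      have hsub : ∀ᶠ z in 𝓝[≠] (0:ℂ), f₂ z - f₂ (-z) = 0 := by
        have hball' : Metric.ball (0:ℂ) 1 ∈ 𝓝[≠] (0:ℂ) :=
          mem_nhdsWithin_of_mem_nhds (Metric.isOpen_ball.mem_nhds hball)
        filter_upwards [hne, hball'] with z hz1 hz2
        rcases mul_eq_zero.1 (hprod z hz2) with h | h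
        · exact absurd h hz1
        · exact h
      have heq : f₂ =ᶠ[𝓝 (0:ℂ)] fun z => f₂ (-z) := by
        rw [← nhdsNE_sup_pure (0:ℂ)]
        rw [EventuallyEq, eventually_sup]
        constructor
        · filter_upwards [hsub] with z hz
          exact sub_eq_zero.1 hz
        · simp [EventuallyEq, h20]
      have hderiv : deriv f₂ 0 = deriv (fun z => f₂ (-z)) 0 := heq.deriv_eq
      have : deriv (fun z => f₂ (-z)) 0 = -deriv f₂ 0 := by
        rw [deriv_comp_neg]; simp
      rw [this, hd₂] at hderiv
      norm_num at hderiv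
  -- injectivity
  have hinj : Set.InjOn f₂ (Metric.ball 0 1) := by
    intro a ha b hb hab
    have hsq' : f (a ^ 2) = f (b ^ 2) := by
      rw [← hsq a ha, ← hsq b hb, hab]
    have h2 : a ^ 2 = b ^ 2 := hI (hmemsq a ha) (hmemsq b hb) hsq'
    have hfac : (a - b) * (a + b) = 0 := by linear_combination h2
    rcases mul_eq_zero.1 hfac with h | h
    · exact sub_eq_zero.1 h
    · -- a = -b
      have hab' : a = -b := eq_neg_of_add_eq_zero_left h
      have h1 : f₂ a = -f₂ b := by rw [hab', hodd b hb]
      have hz : f₂ a = 0 := by linear_combination (h1 + hab) / 2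
      have : f (a ^ 2) = f 0 := by
        rw [← hsq a ha, hz, hf0]; ring
      have ha2 : a ^ 2 = 0 := hI (hmemsq a ha) hball this
      have ha0 : a = 0 := by
        have := pow_eq_zero_iff (n := 2) (by norm_num) |>.1 ha2
        exact this
      rw [ha0] at hab' ⊢
      have : b = 0 := by
        have := hab'.symm
        simpa using this
      rw [this]
  refine ⟨hinj, hodd, ?_⟩
  -- power series
  refine ⟨fun n => ((Nat.factorial n : ℕ) : ℂ)⁻¹ * iteratedDeriv n f₂ 0, ?_, ?_, ?_, ?_⟩
  · simp [h20]
  · simp [iteratedDeriv_one, hd₂]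
  · -- even coefficients vanish
    intro n
    have heq : f₂ =ᶠ[𝓝 (0:ℂ)] fun z => -f₂ (-z) := by
      filter_upwards [Metric.isOpen_ball.mem_nhds hball] with z hz
      rw [hodd z hz]; ring
    have h1 : iteratedDeriv (2 * n) f₂ 0 = iteratedDeriv (2 * n) (fun z => -f₂ (-z)) 0 :=
      heq.iteratedDeriv_eq (2 * n)
    have h2 : iteratedDeriv (2 * n) (fun z => -f₂ (-z)) 0
        = -(iteratedDeriv (2 * n) (fun z => f₂ (-z)) 0) :=
      iteratedDeriv_neg (2 * n) (fun z => f₂ (-z)) 0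
    have h3 : iteratedDeriv (2 * n) (fun z => f₂ (-z)) 0
        = (-1 : ℂ) ^ (2 * n) • iteratedDeriv (2 * n) f₂ (-0) :=
      iteratedDeriv_comp_neg (2 * n) f₂ 0
    have h4 : iteratedDeriv (2 * n) f₂ 0 = 0 := by
      have key : iteratedDeriv (2 * n) f₂ 0 = -iteratedDeriv (2 * n) f₂ 0 := by
        calc iteratedDeriv (2 * n) f₂ 0
            = iteratedDeriv (2 * n) (fun z => -f₂ (-z)) 0 := h1
          _ = -(iteratedDeriv (2 * n) (fun z => f₂ (-z)) 0) := h2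
          _ = -((-1 : ℂ) ^ (2 * n) • iteratedDeriv (2 * n) f₂ (-0)) := by rw [h3]
          _ = -iteratedDeriv (2 * n) f₂ 0 := by simp [pow_mul]
      linear_combination key / 2
    simp [h4]
  · intro z hz
    have hd : DifferentiableOn ℂ f₂ (Metric.ball 0 1) := hN₂.differentiableOn
    have H := Complex.hasSum_taylorSeries_on_ball hd hz
    simp only [sub_zero, smul_eq_mul] at H
    convert H using 2 with n
    · rfl
    · ring
end

section
/- Let ω_{p,q} be the Grunsky coefficients of f₂(z)=√(f(z²)) for f ∈ S with Taylor coefficients aₙ. Then a₄ = 2ω₃₃ + 8ω₁₁ω₁₃ + (10/3)ω₁₁³ and a₅ = 2ω₃₅ + 8ω₁₁ω₃₃ + 5ω₁₃² + 18ω₁₁²ω₁₃ + (7/3)ω₁₁⁴. -/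
open Metric Finset Filter
open scoped NNReal ENNReal

namespace SGrunskyAux

lemma exists_bound {r ρ : ℝ} {u : ℕ → ℂ}
    (h : ∀ z : ℂ, ‖z‖ < r → Summable (fun n => u n * z ^ n))
    (hρ0 : 0 ≤ ρ) (hρ : ρ < r) : ∃ C : ℝ, 0 ≤ C ∧ ∀ n, ‖u n‖ * ρ ^ n ≤ C := by
  have hz : ‖((ρ : ℂ))‖ < r := by
    simpa [Complex.norm_real, abs_of_nonneg hρ0] using hρ
  have hs := (h _ hz).tendsto_atTop_zero.norm
  obtain ⟨C, hC⟩ := hs.bddAbove_range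
  refine ⟨max C 0, le_max_right _ _, fun n => ?_⟩
  have := hC (Set.mem_range_self n)
  have he : ‖u n * (ρ:ℂ) ^ n‖ = ‖u n‖ * ρ ^ n := by
    rw [norm_mul, norm_pow, Complex.norm_real, Real.norm_eq_abs, abs_of_nonneg hρ0]
  rw [he] at this
  exact this.trans (le_max_left _ _)

lemma summable_norm {r : ℝ} {u : ℕ → ℂ}
    (h : ∀ z : ℂ, ‖z‖ < r → Summable (fun n => u n * z ^ n))
    {z : ℂ} (hz : ‖z‖ < r) : Summable (fun n => ‖u n * z ^ n‖) := by
  obtain ⟨ρ, hρ0, hρr, hzρ⟩ : ∃ ρ, 0 < ρ ∧ ρ < r ∧ ‖z‖ < ρ :=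
    ⟨(‖z‖ + r)/2, by linarith [norm_nonneg z], by linarith, by linarith⟩
  obtain ⟨C, hC0, hC⟩ := exists_bound h hρ0.le hρr
  have hq : 0 ≤ ‖z‖ / ρ := by positivity
  have hq1 : ‖z‖ / ρ < 1 := (div_lt_one hρ0).2 hzρ
  refine Summable.of_nonneg_of_le (fun n => norm_nonneg _)
    (fun n => ?_) (((summable_geometric_of_lt_one hq hq1).mul_left C))
  have hρn : (ρ:ℝ) ^ n ≠ 0 := by positivity
  have : ‖u n * z ^ n‖ = (‖u n‖ * ρ ^ n) * (‖z‖ / ρ) ^ n := by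
    rw [norm_mul, norm_pow, div_pow]
    field_simp
  rw [this]
  exact mul_le_mul_of_nonneg_right (hC n) (by positivity)

lemma hasSum_zero_unique {r : ℝ} (hr : 0 < r) {u : ℕ → ℂ}
    (h : ∀ z : ℂ, ‖z‖ < r → HasSum (fun n => u n * z ^ n) 0) : ∀ n, u n = 0 := by
  have hsum : ∀ z : ℂ, ‖z‖ < r → Summable (fun n => u n * z ^ n) :=
    fun z hz => (h z hz).summable
  have hball : HasFPowerSeriesOnBall (0 : ℂ → ℂ) (FormalMultilinearSeries.ofScalars ℂ u) 0
      (ENNReal.ofReal (r / 2)) := by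
    constructor
    · have : ENNReal.ofReal (r/2) = ((r/2).toNNReal : ENNReal) := rfl
      rw [this]
      apply FormalMultilinearSeries.le_radius_of_summable
      have h2 : ‖(((r/2 : ℝ)):ℂ)‖ < r := by
        rw [Complex.norm_real, Real.norm_eq_abs, abs_of_nonneg (by linarith)]; linarith
      have := summable_norm hsum h2
      apply this.congr
      intro n
      rw [norm_mul, norm_pow, Complex.norm_real, Real.norm_eq_abs,
        abs_of_nonneg (by linarith : (0:ℝ) ≤ r/2),
        FormalMultilinearSeries.ofScalars_norm, Real.coe_toNNReal _ (by linarith)]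
    · simpa using (by linarith : (0:ℝ) < r/2)
    · intro y hy
      rw [Metric.emetric_ball, mem_ball_zero_iff] at hy
      have hy' : ‖y‖ < r := by linarith
      simp only [Pi.zero_apply, zero_add]
      have he : (fun n => FormalMultilinearSeries.ofScalars ℂ u n fun _ => y)
          = fun n => u n * y ^ n := by
        funext n
        rw [FormalMultilinearSeries.ofScalars_apply_eq, smul_eq_mul]
      rw [he]
      exact h y hy'
  have hz := hball.hasFPowerSeriesAt.eq_zero
  have := (FormalMultilinearSeries.ofScalars_series_eq_zero ℂ).1 hz
  intro n
  exact congrFun this n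

lemma hasSum_cauchy {r : ℝ} {u v : ℕ → ℂ} {F G : ℂ → ℂ}
    (hu : ∀ z : ℂ, ‖z‖ < r → HasSum (fun n => u n * z ^ n) (F z))
    (hv : ∀ z : ℂ, ‖z‖ < r → HasSum (fun n => v n * z ^ n) (G z))
    {z : ℂ} (hz : ‖z‖ < r) :
    HasSum (fun n => (∑ i ∈ range (n+1), u i * v (n - i)) * z ^ n) (F z * G z) := by
  have h1 := summable_norm (fun z hz => (hu z hz).summable) hz
  have h2 := summable_norm (fun z hz => (hv z hz).summable) hz
  have h3 := hasSum_sum_range_mul_of_summable_norm h1 h2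
  rw [(hu z hz).tsum_eq, (hv z hz).tsum_eq] at h3
  have he : (fun n => ∑ k ∈ range (n+1), (u k * z ^ k) * (v (n-k) * z ^ (n-k)))
      = fun n => (∑ i ∈ range (n+1), u i * v (n - i)) * z ^ n := by
    funext n
    rw [Finset.sum_mul]
    apply Finset.sum_congr rfl
    intro i hi
    have hin : i ≤ n := Nat.lt_succ_iff.mp (Finset.mem_range.mp hi)
    have : z ^ i * z ^ (n - i) = z ^ n := by
      rw [← pow_add]; congr 1; omega
    calc u i * z ^ i * (v (n-i) * z ^ (n-i)) = u i * v (n-i) * (z ^ i * z ^ (n-i)) := by ring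
    _ = u i * v (n-i) * z ^ n := by rw [this]
  rwa [he] at h3


lemma hasSum_shift {u : ℕ → ℂ} {S z : ℂ} (k : ℕ) (h : HasSum (fun n => u n * z ^ n) S) :
    HasSum (fun n => (if n < k then 0 else u (n - k)) * z ^ n) (S * z ^ k) := by
  have h1 : HasSum (fun n => (if n + k < k then (0:ℂ) else u (n + k - k)) * z ^ (n+k))
      (S * z ^ k) := by
    have he : (fun n => (if n + k < k then (0:ℂ) else u (n + k - k)) * z ^ (n+k))
        = fun n => (u n * z ^ n) * z ^ k := by
      funext n
      rw [if_neg (by omega), Nat.add_sub_cancel, pow_add]; ring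
    rw [he]
    exact h.mul_right _
  have h2 := (hasSum_nat_add_iff (f := fun n => (if n < k then (0:ℂ) else u (n - k)) * z ^ n) k).mp h1
  have hs : ∑ i ∈ range k, (if i < k then (0:ℂ) else u (i - k)) * z ^ i = 0 := by
    apply Finset.sum_eq_zero
    intro i hi
    rw [if_pos (Finset.mem_range.mp hi), zero_mul]
  rwa [hs, add_zero] at h2

lemma hasSum_poly (N : ℕ) (u : ℕ → ℂ) (z : ℂ) :
    HasSum (fun n => (if n ≤ N then u n else 0) * z ^ n) (∑ i ∈ range (N+1), u i * z ^ i) := by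
  have h := hasSum_sum_of_ne_finset_zero
    (f := fun n => (if n ≤ N then u n else 0) * z ^ n) (s := range (N+1)) (L := SummationFilter.unconditional ℕ)
    (by intro b hb
        show (if b ≤ N then u b else 0) * z ^ b = 0
        rw [if_neg (by simpa [Nat.lt_succ_iff] using hb), zero_mul])
  have he : ∑ b ∈ range (N+1), (if b ≤ N then u b else 0) * z ^ b
      = ∑ i ∈ range (N+1), u i * z ^ i := by
    apply Finset.sum_congr rfl
    intro i hi
    rw [if_pos (Nat.lt_succ_iff.mp (Finset.mem_range.mp hi))]
  rwa [he] at h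

lemma hasSum_const (C z : ℂ) : HasSum (fun n => (if n = 0 then C else 0) * z ^ n) C := by
  have := hasSum_single (f := fun n => (if n = 0 then C else 0) * z ^ n) 0
    (by intro b hb
        show (if b = 0 then C else 0) * z ^ b = 0
        rw [if_neg hb, zero_mul])
  simpa using this

lemma hasSum_even {a : ℕ → ℂ} {z S : ℂ} (h : HasSum (fun n => a n * (z^2) ^ n) S) :
    HasSum (fun m => (if m % 2 = 0 then a (m / 2) else 0) * z ^ m) S := by
  refine (Function.Injective.hasSum_iff (g := fun n => 2 * n)
    (fun a b hab => by simp only [] at hab; omega) ?_).mp ?_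
  · intro x hx
    have hx2 : x % 2 ≠ 0 := by
      intro hm
      exact hx ⟨x / 2, by simp only []; omega⟩
    rw [if_neg hx2, zero_mul]
  · have he : ((fun m => (if m % 2 = 0 then a (m / 2) else 0) * z ^ m) ∘ (fun n => 2 * n))
        = fun n => a n * (z^2) ^ n := by
      funext n
      simp only [Function.comp_apply]
      rw [if_pos (by omega), ← pow_mul]
      congr 2
      omega
    rw [he]
    exact h


lemma hasDerivAt_of_hasSum {r : ℝ} {u : ℕ → ℂ} {F : ℂ → ℂ}
    (hu : ∀ z : ℂ, ‖z‖ < r → HasSum (fun n => u n * z ^ n) (F z))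
    {z₀ : ℂ} (hz : ‖z₀‖ < r) :
    ∃ L, HasDerivAt F L z₀ ∧ HasSum (fun n : ℕ => ((n:ℂ)+1) * u (n+1) * z₀ ^ n) L := by
  have h0 : 0 ≤ ‖z₀‖ := norm_nonneg _
  obtain ⟨s, ρ, hs0, hρ0, hsρ, hρr, hzs⟩ :
      ∃ s ρ : ℝ, 0 < s ∧ 0 < ρ ∧ s < ρ ∧ ρ < r ∧ ‖z₀‖ < s :=
    ⟨(2*‖z₀‖ + r)/3, (‖z₀‖ + 2*r)/3, by linarith, by linarith, by linarith, by linarith,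
      by linarith⟩
  obtain ⟨C, hC0, hC⟩ := exists_bound (fun z hz => (hu z hz).summable) hρ0.le hρr
  obtain ⟨q, hqdef, hq0', hq1'⟩ : ∃ q : ℝ, q = s / ρ ∧ True ∧ True := ⟨s/ρ, rfl, trivial, trivial⟩
  have hq0 : 0 < q := by rw [hqdef]; positivity
  have hq1 : q < 1 := by rw [hqdef]; exact (div_lt_one hρ0).2 hsρ
  set G : ℕ → ℂ → ℂ := fun n x => (n:ℂ) * u n * x ^ (n-1) with hGdef
  set M : ℕ → ℝ := fun n => (C/ρ) * ((n:ℝ) * q^(n-1)) with hMdef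
  have hM : Summable M := by
    have h1 : Summable (fun n : ℕ => (n:ℝ)^1 * q^n) :=
      summable_pow_mul_geometric_of_norm_lt_one 1 (by rwa [Real.norm_eq_abs, abs_of_nonneg hq0.le])
    have h2 : Summable (fun n : ℕ => (1/q) * ((n:ℝ)^1 * q^n)) := h1.mul_left _
    apply Summable.mul_left
    apply h2.congr
    intro n
    cases n with
    | zero => simp
    | succ m =>
      show 1/q * (((m+1 : ℕ):ℝ)^1 * q^(m+1)) = ((m+1 : ℕ):ℝ) * q^(m+1-1)
      have : q^(m+1) = q * q^m := pow_succ' q m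
      rw [this, Nat.add_sub_cancel]
      field_simp
  have hbound : ∀ n, ∀ x : ℂ, x ∈ ball (0:ℂ) s → ‖G n x‖ ≤ M n := by
    intro n x hx
    rw [mem_ball_zero_iff] at hx
    cases n with
    | zero => simp [hGdef, hMdef]
    | succ m =>
      have hxp : ‖x‖^m ≤ s^m := pow_le_pow_left₀ (norm_nonneg x) hx.le m
      have hun : ‖u (m+1)‖ ≤ C / ρ^(m+1) := by
        rw [le_div_iff₀ (by positivity)]
        exact hC (m+1)
      have : ‖G (m+1) x‖ = ((m+1:ℕ):ℝ) * ‖u (m+1)‖ * ‖x‖^m := by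
        rw [hGdef]
        simp only []
        rw [norm_mul, norm_mul, norm_pow, Complex.norm_natCast]
        norm_num
      rw [this]
      have step1 : ((m+1:ℕ):ℝ) * ‖u (m+1)‖ * ‖x‖^m ≤ ((m+1:ℕ):ℝ) * (C / ρ^(m+1)) * s^m := by
        apply mul_le_mul
        · exact mul_le_mul_of_nonneg_left hun (by positivity)
        · exact hxp
        · positivity
        · positivity
      apply step1.trans
      apply le_of_eq
      rw [hMdef, hqdef]
      simp only [Nat.add_sub_cancel]
      rw [div_pow, pow_succ]
      field_simp
  have htu : TendstoUniformlyOn (fun (t : Finset ℕ) x => ∑ n ∈ t, G n x)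
      (fun x => ∑' n, G n x) atTop (ball (0:ℂ) s) :=
    tendstoUniformlyOn_tsum hM hbound
  have hD : HasDerivAt F (∑' n, G n z₀) z₀ := by
    apply hasDerivAt_of_tendstoUniformlyOn isOpen_ball htu
    · apply Filter.Eventually.of_forall
      intro t x hx
      have : ∀ n ∈ t, HasDerivAt (fun x : ℂ => u n * x ^ n) (G n x) x := by
        intro n _
        have := (hasDerivAt_pow n x).const_mul (u n)
        refine this.congr_deriv ?_
        rw [hGdef]; ring
      exact HasDerivAt.sum this
    · intro x hx
      rw [mem_ball_zero_iff] at hx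
      have h := hu x (by linarith); simp only [Finset.sum_apply]; exact h
    · exact mem_ball_zero_iff.mpr hzs
  have hGs : Summable (fun n => G n z₀) :=
    Summable.of_norm_bounded hM (fun n => hbound n z₀ (mem_ball_zero_iff.mpr hzs))
  have hG := hGs.hasSum
  have h2 := (hasSum_nat_add_iff' (f := fun n => G n z₀) 1).mpr hG
  refine ⟨∑' n, G n z₀, hD, ?_⟩
  have hsum0 : ∑ i ∈ range 1, G i z₀ = 0 := by
    simp [hGdef]
  rw [hsum0, sub_zero] at h2
  have he : (fun n : ℕ => G (n+1) z₀) = fun n : ℕ => ((n:ℂ)+1) * u (n+1) * z₀ ^ n := by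
    funext n
    rw [hGdef]
    simp only [Nat.add_sub_cancel]
    push_cast
    ring
  rwa [he] at h2


lemma coeff_extract {F : ℂ → ℂ} {R : ℝ≥0} (hR : 0 < R)
    (hd : DifferentiableOn ℂ F (closedBall (0:ℂ) (R:ℝ))) :
    ∃ c : ℕ → ℂ, ∀ z : ℂ, ‖z‖ < (R:ℝ) → HasSum (fun n => c n * z ^ n) (F z) := by
  have hps := hd.hasFPowerSeriesOnBall hR
  refine ⟨fun n => cauchyPowerSeries F 0 (R:ℝ) n (fun _ => 1), fun z hz => ?_⟩
  have hmem : z ∈ Metric.eball (0:ℂ) (R : ℝ≥0∞) := by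
    rw [Metric.emetric_ball_nnreal, mem_ball_zero_iff]
    exact hz
  have h1 := hps.hasSum hmem
  rw [zero_add] at h1
  have he : (fun n => cauchyPowerSeries F 0 (R:ℝ) n fun _ => z)
      = fun n => (cauchyPowerSeries F 0 (R:ℝ) n fun _ => 1) * z ^ n := by
    funext n
    have h2 := (cauchyPowerSeries F 0 (R:ℝ) n).map_smul_univ (fun _ => z) (fun _ => 1)
    simp only [smul_eq_mul, mul_one, Finset.prod_const, Finset.card_univ,
      Fintype.card_fin] at h2
    rw [h2]; exact mul_comm _ _
  rwa [he] at h1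

end SGrunskyAux

open SGrunskyAux

theorem stmt_5 (f : ℂ → ℂ) (hA : AnalyticOn ℂ f (Metric.ball 0 1))
    (hI : Set.InjOn f (Metric.ball 0 1))
    (hf0 : f 0 = 0) (hf1 : deriv f 0 = 1)
    (a : ℕ → ℂ) (ha : ∀ z ∈ Metric.ball (0:ℂ) 1, HasSum (fun n => a n * z ^ n) (f z))
    (ha0 : a 0 = 0) (ha1 : a 1 = 1)
    (f₂ : ℂ → ℂ) (hA₂ : AnalyticOn ℂ f₂ (Metric.ball 0 1))
    (hsq : ∀ z ∈ Metric.ball (0:ℂ) 1, (f₂ z) ^ 2 = f (z ^ 2))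
    (hd₂ : deriv f₂ 0 = 1)
    (ω : ℕ → ℕ → ℂ) (hsym : ∀ p q, ω p q = ω q p)
    (hω : ∀ t ∈ Metric.ball (0:ℂ) 1, ∀ z ∈ Metric.ball (0:ℂ) 1, t ≠ z →
      ∃ w, HasSum (fun pq : ℕ × ℕ => ω pq.1 pq.2 * t ^ pq.1 * z ^ pq.2) w ∧
        Complex.exp w = (f₂ t - f₂ z) / (t - z)) :
    a 4 = 2 * ω 3 3 + 8 * ω 1 1 * ω 1 3 + (10 / 3) * ω 1 1 ^ 3 ∧
    a 5 = 2 * ω 3 5 + 8 * ω 1 1 * ω 3 3 + 5 * ω 1 3 ^ 2 +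
      18 * ω 1 1 ^ 2 * ω 1 3 + (7 / 3) * ω 1 1 ^ 4 := by
  classical
  have hc2 : (((1/2 : ℝ≥0)):ℝ) = (1/2:ℝ) := by norm_num
  have hc4 : (((1/4 : ℝ≥0)):ℝ) = (1/4:ℝ) := by norm_num
  -- power series of f₂ on ball 1/2
  obtain ⟨b, Hb'⟩ := coeff_extract (F := f₂) (R := 1/2) (by norm_num)
    (hA₂.differentiableOn.mono (fun x hx => by
      rw [mem_closedBall_zero_iff] at hx
      rw [mem_ball_zero_iff]
      rw [hc2] at hx
      linarith))
  have Hb : ∀ z : ℂ, ‖z‖ < (1/2:ℝ) → HasSum (fun n => b n * z ^ n) (f₂ z) :=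
    fun z hz => Hb' z (by rw [hc2]; exact hz)
  -- b 0 = 0
  have hf₂0 : f₂ 0 = 0 := by
    have h := hsq 0 (by simp)
    rw [show (0:ℂ)^2 = 0 by ring, hf0] at h
    exact pow_eq_zero_iff (by norm_num) |>.mp h
  have hb0 : b 0 = 0 := by
    have h := Hb 0 (by norm_num)
    have h2 := hasSum_single (f := fun n => b n * (0:ℂ) ^ n) 0
      (by intro n hn; simp [zero_pow hn])
    simp only [pow_zero, mul_one] at h2
    have := h.unique h2
    rw [hf₂0] at this
    exact this.symm
  -- b 1 = 1
  have hb1 : b 1 = 1 := by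
    obtain ⟨L, hD, hS⟩ := hasDerivAt_of_hasSum Hb (by norm_num : ‖(0:ℂ)‖ < 1/2)
    have h2 := hasSum_single (f := fun n : ℕ => ((n:ℂ)+1) * b (n+1) * (0:ℂ) ^ n) 0
      (by intro n hn; simp [zero_pow hn])
    simp only [Nat.cast_zero, zero_add, pow_zero, mul_one, one_mul] at h2
    have hL : L = b 1 := hS.unique h2
    rw [← hd₂, hD.deriv, hL]
  -- squared relation
  have hsq2 : ∀ z : ℂ, ‖z‖ < (1/2:ℝ) →
      HasSum (fun n => (if n % 2 = 0 then a (n/2) else 0) * z ^ n) ((f₂ z)^2) := by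
    intro z hz
    have hz1 : ‖z‖ < 1 := by linarith
    have hz2 : (z^2) ∈ ball (0:ℂ) 1 := by
      rw [mem_ball_zero_iff, norm_pow]
      nlinarith [norm_nonneg z]
    have h1 := ha (z^2) hz2
    have h2 : (f₂ z)^2 = f (z^2) := hsq z (mem_ball_zero_iff.mpr hz1)
    rw [← h2] at h1
    exact hasSum_even h1
  have hkey : ∀ n, ∑ i ∈ range (n+1), b i * b (n-i) = (if n % 2 = 0 then a (n/2) else 0) := by
    have h0 : ∀ z : ℂ, ‖z‖ < (1/2:ℝ) → HasSum (fun n =>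
        ((∑ i ∈ range (n+1), b i * b (n-i)) - (if n % 2 = 0 then a (n/2) else 0)) * z ^ n) 0 := by
      intro z hz
      have h3 := (hasSum_cauchy Hb Hb hz).sub (hsq2 z hz)
      rw [show f₂ z * f₂ z - (f₂ z)^2 = 0 by ring] at h3
      have he : (fun n => (∑ i ∈ range (n+1), b i * b (n-i)) * z ^ n
          - (if n % 2 = 0 then a (n/2) else 0) * z ^ n)
          = fun n => ((∑ i ∈ range (n+1), b i * b (n-i))
          - (if n % 2 = 0 then a (n/2) else 0)) * z ^ n := by
        funext n; ring
      rwa [he] at h3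
    intro n
    exact sub_eq_zero.mp (hasSum_zero_unique (by norm_num) h0 n)
  have hb2 : b 2 = 0 := by
    have h := hkey 3
    simp [Finset.sum_range_succ, hb0, hb1] at h
    linear_combination h
  have hb4 : b 4 = 0 := by
    have h := hkey 5
    simp [Finset.sum_range_succ, hb0, hb1, hb2] at h
    linear_combination h
  have hb6 : b 6 = 0 := by
    have h := hkey 7
    simp [Finset.sum_range_succ, hb0, hb1, hb2, hb4] at h
    linear_combination h
  have hb8 : b 8 = 0 := by
    have h := hkey 9
    simp [Finset.sum_range_succ, hb0, hb1, hb2, hb4, hb6] at h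
    linear_combination h
  have ha4 : a 4 = 2 * b 7 + 2 * b 3 * b 5 := by
    have h := hkey 8
    simp [Finset.sum_range_succ, hb0, hb1, hb2, hb4, hb6] at h
    linear_combination -h
  have ha5 : a 5 = 2 * b 9 + 2 * b 3 * b 7 + b 5 ^ 2 := by
    have h := hkey 10
    simp [Finset.sum_range_succ, hb0, hb1, hb2, hb4, hb6, hb8] at h
    linear_combination -h
  -- Grunsky machinery
  set W : ℂ → ℂ → ℂ := fun t z => ∑' pq : ℕ × ℕ, ω pq.1 pq.2 * t ^ pq.1 * z ^ pq.2 with hWdef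
  have hpair : ∀ t z : ℂ, ‖t‖ < 1 → ‖z‖ < 1 →
      Summable (fun pq : ℕ × ℕ => ‖ω pq.1 pq.2 * t ^ pq.1 * z ^ pq.2‖) := by
    intro t z ht hz
    obtain ⟨ρ, hρ0, hρ1, htρ, hzρ⟩ : ∃ ρ : ℝ, 0 < ρ ∧ ρ < 1 ∧ ‖t‖ ≤ ρ ∧ ‖z‖ ≤ ρ := by
      refine ⟨(max ‖t‖ ‖z‖ + 1)/2, by positivity, ?_, ?_, ?_⟩
      · have := max_lt ht hz; linarith
      · have := le_max_left ‖t‖ ‖z‖; have := max_lt ht hz; linarith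
      · have := le_max_right ‖t‖ ‖z‖; have := max_lt ht hz; linarith
    have hne : ((ρ:ℂ)) ≠ -(ρ:ℂ) := by
      intro h
      have h2 : (2:ℂ) * (ρ:ℂ) = 0 := by linear_combination h
      simp only [mul_eq_zero] at h2
      rcases h2 with h2 | h2
      · norm_num at h2
      · exact hρ0.ne' (by exact_mod_cast h2)
    have hm1 : ((ρ:ℂ)) ∈ ball (0:ℂ) 1 := by
      rw [mem_ball_zero_iff, Complex.norm_real, Real.norm_eq_abs, abs_of_pos hρ0]; exact hρ1
    have hm2 : (-(ρ:ℂ)) ∈ ball (0:ℂ) 1 := by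
      rw [mem_ball_zero_iff, norm_neg, Complex.norm_real, Real.norm_eq_abs, abs_of_pos hρ0]
      exact hρ1
    obtain ⟨w, hw, _⟩ := hω _ hm1 _ hm2 hne
    have hN : Summable (fun pq : ℕ × ℕ => ‖ω pq.1 pq.2 * (ρ:ℂ) ^ pq.1 * (-(ρ:ℂ)) ^ pq.2‖) :=
      summable_norm_iff.mpr hw.summable
    refine Summable.of_nonneg_of_le (fun pq => norm_nonneg _) (fun pq => ?_) hN
    rw [norm_mul, norm_mul, norm_pow, norm_pow, norm_mul, norm_mul, norm_pow, norm_pow,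
      norm_neg, Complex.norm_real, Real.norm_eq_abs, abs_of_pos hρ0]
    gcongr <;> first | exact norm_nonneg _ | exact htρ | exact hzρ
  have hWsum : ∀ t z : ℂ, ‖t‖ < 1 → ‖z‖ < 1 →
      HasSum (fun pq : ℕ × ℕ => ω pq.1 pq.2 * t ^ pq.1 * z ^ pq.2) (W t z) :=
    fun t z ht hz => ((hpair t z ht hz).of_norm).hasSum
  have hWexp : ∀ t z : ℂ, ‖t‖ < 1 → ‖z‖ < 1 → t ≠ z →
      Complex.exp (W t z) = (f₂ t - f₂ z) / (t - z) := by
    intro t z ht hz hne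
    obtain ⟨w, hw, he⟩ := hω t (mem_ball_zero_iff.mpr ht) z (mem_ball_zero_iff.mpr hz) hne
    rw [show W t z = w from (hWsum t z ht hz).unique hw]
    exact he
  set g : ℕ → ℂ → ℂ := fun p z => ∑' q, ω p q * z ^ q with hgdef
  have hg : ∀ p, ∀ z : ℂ, ‖z‖ < 1 → HasSum (fun q => ω p q * z ^ q) (g p z) := by
    intro p z hz
    have hhalf : ‖((1:ℝ)/2 : ℂ)‖ < 1 := by norm_num
    have h1 := (hpair _ z hhalf hz).of_norm
    have h2 := h1.comp_injective (i := fun q => ((p, q) : ℕ × ℕ))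
      (fun x y hxy => by simpa using hxy)
    have h3 := h2.mul_left ((((1:ℝ)/2 : ℂ)) ^ p)⁻¹
    have he : (fun q => ((((1:ℝ)/2 : ℂ)) ^ p)⁻¹ *
        ((fun pq : ℕ × ℕ => ω pq.1 pq.2 * ((1:ℝ)/2 : ℂ) ^ pq.1 * z ^ pq.2) ∘
          (fun q => ((p, q) : ℕ × ℕ))) q) = fun q => ω p q * z ^ q := by
      funext q
      simp only [Function.comp_apply]
      have hp0 : (((1:ℝ)/2 : ℂ)) ^ p ≠ 0 := by
        apply pow_ne_zero; norm_num
      field_simp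
    rw [he] at h3
    exact h3.hasSum
  have hΦ : ∀ z : ℂ, ‖z‖ < 1 → ∀ t : ℂ, ‖t‖ < 1 → HasSum (fun p => g p z * t ^ p) (W t z) := by
    intro z hz t ht
    refine HasSum.prod_fiberwise (hWsum t z ht hz) (fun p => ?_)
    have h1 := (hg p z hz).mul_right (t ^ p)
    have he : (fun q => ω p q * z ^ q * t ^ p) = fun q => ω p q * t ^ p * z ^ q := by
      funext q; ring
    rwa [he] at h1
  -- Layer 1 : function identities in z
  have hT : ∀ z : ℂ, ‖z‖ < (1/4:ℝ) →
      (f₂ z - z = z * g 1 z * f₂ z) ∧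
      (2*(f₂ z - z) = 2 * g 2 z * z^2 * f₂ z + g 1 z * z * (f₂ z - z)) ∧
      (3*(f₂ z - z - b 3 * z^3) = 3 * g 3 z * z^3 * f₂ z + 2 * g 2 z * z^2 * (f₂ z - z)
        + g 1 z * z * (f₂ z - z)) := by
    intro z hz4
    have hz1 : ‖z‖ < 1 := by linarith
    have hΦz : ∀ t : ℂ, ‖t‖ < 1 → HasSum (fun p => g p z * t ^ p) (W t z) := hΦ z hz1
    set D : ℂ → ℂ := fun t => ∑' p : ℕ, ((p:ℂ)+1) * g (p+1) z * t ^ p with hDdef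
    have hDD : ∀ t : ℂ, ‖t‖ < 1 → HasDerivAt (fun t' => W t' z) (D t) t ∧
        HasSum (fun p : ℕ => ((p:ℂ)+1) * g (p+1) z * t ^ p) (D t) := by
      intro t ht
      obtain ⟨L, hD1, hL⟩ := hasDerivAt_of_hasSum hΦz ht
      have hDt : D t = L := by rw [hDdef]; exact hL.tsum_eq
      rw [hDt]
      exact ⟨hD1, hL⟩
    set E : ℂ → ℂ := fun t => Complex.exp (W t z) with hEdef
    have hEdiff : DifferentiableOn ℂ E (closedBall (0:ℂ) ((1/4 : ℝ≥0):ℝ)) := by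
      intro x hx
      rw [mem_closedBall_zero_iff, hc4] at hx
      have hx1 : ‖x‖ < 1 := by linarith
      exact ((hDD x hx1).1.cexp).differentiableAt.differentiableWithinAt
    obtain ⟨ε, Hε'⟩ := coeff_extract (by norm_num) hEdiff
    have Hε : ∀ t : ℂ, ‖t‖ < (1/4:ℝ) → HasSum (fun n => ε n * t ^ n) (E t) :=
      fun t ht => Hε' t (by rw [hc4]; exact ht)
    -- (A) identities
    have hA0 : ∀ t : ℂ, ‖t‖ < (1/4:ℝ) → E t * (t - z) = f₂ t - f₂ z := by
      intro t ht
      rcases eq_or_ne t z with h | h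
      · rw [h]; simp
      · have hWe := hWexp t z (by linarith) hz1 h
        show Complex.exp (W t z) * (t - z) = _
        rw [hWe, div_mul_cancel₀]
        exact sub_ne_zero.mpr h
    have hAc : ∀ n : ℕ, (if n < 1 then 0 else ε (n-1)) - z * ε n - b n
        + (if n = 0 then f₂ z else 0) = 0 := by
      apply hasSum_zero_unique (by norm_num : (0:ℝ) < 1/4)
      intro t ht
      have h1 := Hε t ht
      have h2 := hasSum_shift 1 h1
      have h3 := h1.mul_left z
      have h3' : HasSum (fun n => (z * ε n) * t ^ n) (z * E t) := by
        have he : (fun n => (z * ε n) * t ^ n) = fun n => z * (ε n * t ^ n) := by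
          funext n; ring
        rw [he]; exact h3
      have h4 := Hb t (by linarith)
      have h5 := hasSum_const (f₂ z) t
      have h6 := ((h2.sub h3').sub h4).add h5
      have h7 : E t * t ^ 1 - z * E t - f₂ t + f₂ z = 0 := by
        have := hA0 t ht; linear_combination this
      rw [h7] at h6
      have he : (fun n => ((if n < 1 then 0 else ε (n-1)) * t ^ n - (z * ε n) * t ^ n
          - b n * t ^ n) + (if n = 0 then f₂ z else 0) * t ^ n)
          = fun n => ((if n < 1 then 0 else ε (n-1)) - z * ε n - b n
          + (if n = 0 then f₂ z else 0)) * t ^ n := by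
        funext n; ring
      rwa [he] at h6
    -- (B) identities
    have hBc : ∀ n : ℕ, ((n:ℂ)+1) * ε (n+1)
        - ∑ i ∈ range (n+1), (((i:ℂ)+1) * g (i+1) z) * ε (n-i) = 0 := by
      apply hasSum_zero_unique (by norm_num : (0:ℝ) < 1/4)
      intro t ht
      have ht1 : ‖t‖ < 1 := by linarith
      have hDs : ∀ t' : ℂ, ‖t'‖ < (1/4:ℝ) →
          HasSum (fun p : ℕ => (((p:ℂ)+1) * g (p+1) z) * t' ^ p) (D t') :=
        fun t' ht' => (hDD t' (by linarith)).2
      have h1 := hasSum_cauchy hDs Hε ht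
      obtain ⟨L2, hD2, hL2⟩ := hasDerivAt_of_hasSum Hε ht
      have hDE : HasDerivAt E (E t * D t) t := (hDD t ht1).1.cexp
      have hL2E : L2 = E t * D t := hD2.unique hDE
      rw [hL2E] at hL2
      have h6 := hL2.sub h1
      rw [show E t * D t - D t * E t = 0 by ring] at h6
      have he : (fun n : ℕ => ((n:ℂ)+1) * ε (n+1) * t ^ n
          - (∑ i ∈ range (n+1), (((i:ℂ)+1) * g (i+1) z) * ε (n-i)) * t ^ n)
          = fun n : ℕ => (((n:ℂ)+1) * ε (n+1)
          - ∑ i ∈ range (n+1), (((i:ℂ)+1) * g (i+1) z) * ε (n-i)) * t ^ n := by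
        funext n; ring
      rwa [he] at h6
    -- scalar consequences
    have hA0' := hAc 0
    have hA1 := hAc 1
    have hA2 := hAc 2
    have hA3 := hAc 3
    norm_num at hA0' hA1 hA2 hA3
    have hB0 := hBc 0
    have hB1 := hBc 1
    have hB2 := hBc 2
    simp only [Finset.sum_range_succ, Finset.sum_range_zero] at hB0 hB1 hB2
    norm_num at hB0 hB1 hB2
    have he0 : z * ε 0 = f₂ z := by linear_combination -hA0' - hb0
    have he1 : z^2 * ε 1 = f₂ z - z := by linear_combination -hA0' - hb0 - z*hA1 - z*hb1
    have he2 : z^3 * ε 2 = f₂ z - z := by linear_combination he1 - z^2*hA2 - z^2*hb2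
    have he3 : z^4 * ε 3 = f₂ z - z - b 3 * z^3 := by linear_combination he2 - z^3*hA3
    refine ⟨?_, ?_, ?_⟩
    · linear_combination (-1)*he1 + z^2*hB0 + z*(g 1 z)*he0
    · linear_combination (-2)*he2 + z^3*hB1 + (g 1 z)*z*he1 + 2*(g 2 z)*z^2*he0
    · linear_combination (-3)*he3 + z^4*hB2 + 3*(g 3 z)*z^3*he0 + 2*(g 2 z)*z^2*he1
        + (g 1 z)*z*he2
    -- Layer 2 : series in z
  have hg14 : ∀ z : ℂ, ‖z‖ < (1/4:ℝ) → HasSum (fun q => ω 1 q * z ^ q) (g 1 z) :=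
    fun z hz => hg 1 z (by linarith)
  have hg24 : ∀ z : ℂ, ‖z‖ < (1/4:ℝ) → HasSum (fun q => ω 2 q * z ^ q) (g 2 z) :=
    fun z hz => hg 2 z (by linarith)
  have hg34 : ∀ z : ℂ, ‖z‖ < (1/4:ℝ) → HasSum (fun q => ω 3 q * z ^ q) (g 3 z) :=
    fun z hz => hg 3 z (by linarith)
  have HT0 : ∀ z : ℂ, ‖z‖ < (1/4:ℝ) → HasSum (fun m => b m * z ^ m) (f₂ z) :=
    fun z hz => Hb z (by linarith)
  have HT1 : ∀ z : ℂ, ‖z‖ < (1/4:ℝ) →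
      HasSum (fun m => (if m ≤ 1 then 0 else b m) * z ^ m) (f₂ z - z) := by
    intro z hz
    have h := (HT0 z hz).sub (hasSum_poly 1 b z)
    have hv : f₂ z - ∑ i ∈ range 2, b i * z ^ i = f₂ z - z := by
      rw [Finset.sum_range_succ, Finset.sum_range_succ, Finset.sum_range_zero]
      rw [hb0, hb1]; ring
    rw [hv] at h
    have he : (fun m => b m * z ^ m - (if m ≤ 1 then b m else 0) * z ^ m)
        = fun m => (if m ≤ 1 then 0 else b m) * z ^ m := by
      funext m
      by_cases hm : m ≤ 1 <;> simp [hm]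
    rwa [he] at h
  have HT2 : ∀ z : ℂ, ‖z‖ < (1/4:ℝ) →
      HasSum (fun m => (if m ≤ 2 then 0 else b m) * z ^ m) (f₂ z - z) := by
    intro z hz
    have h := (HT0 z hz).sub (hasSum_poly 2 b z)
    have hv : f₂ z - ∑ i ∈ range 3, b i * z ^ i = f₂ z - z := by
      rw [Finset.sum_range_succ, Finset.sum_range_succ, Finset.sum_range_succ,
        Finset.sum_range_zero]
      rw [hb0, hb1, hb2]; ring
    rw [hv] at h
    have he : (fun m => b m * z ^ m - (if m ≤ 2 then b m else 0) * z ^ m)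
        = fun m => (if m ≤ 2 then 0 else b m) * z ^ m := by
      funext m
      by_cases hm : m ≤ 2 <;> simp [hm]
    rwa [he] at h
  have HT3 : ∀ z : ℂ, ‖z‖ < (1/4:ℝ) →
      HasSum (fun m => (if m ≤ 3 then 0 else b m) * z ^ m) (f₂ z - z - b 3 * z^3) := by
    intro z hz
    have h := (HT0 z hz).sub (hasSum_poly 3 b z)
    have hv : f₂ z - ∑ i ∈ range 4, b i * z ^ i = f₂ z - z - b 3 * z^3 := by
      rw [Finset.sum_range_succ, Finset.sum_range_succ, Finset.sum_range_succ,
        Finset.sum_range_succ, Finset.sum_range_zero]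
      rw [hb0, hb1, hb2]; ring
    rw [hv] at h
    have he : (fun m => b m * z ^ m - (if m ≤ 3 then b m else 0) * z ^ m)
        = fun m => (if m ≤ 3 then 0 else b m) * z ^ m := by
      funext m
      by_cases hm : m ≤ 3 <;> simp [hm]
    rwa [he] at h
  -- Family 1
  have Fam1 : ∀ n : ℕ, (if n ≤ 1 then 0 else b n)
      - (if n < 1 then 0 else ∑ i ∈ range (n-1+1), ω 1 i * b (n-1-i)) = 0 := by
    apply hasSum_zero_unique (by norm_num : (0:ℝ) < 1/4)
    intro z hz
    have h1 := hasSum_cauchy hg14 HT0 hz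
    have h2 := hasSum_shift 1 h1
    have h3 := (HT1 z hz).sub h2
    rw [show (f₂ z - z) - (g 1 z * f₂ z) * z ^ 1 = 0 by
      linear_combination (hT z hz).1] at h3
    have he : (fun n => (if n ≤ 1 then 0 else b n) * z ^ n
        - (if n < 1 then 0 else ∑ i ∈ range (n-1+1), ω 1 i * b (n-1-i)) * z ^ n)
        = fun n => ((if n ≤ 1 then 0 else b n)
        - (if n < 1 then 0 else ∑ i ∈ range (n-1+1), ω 1 i * b (n-1-i))) * z ^ n := by
      funext n; ring
    rwa [he] at h3
  -- Family 2
  have Fam2 : ∀ n : ℕ, 2 * (if n ≤ 2 then 0 else b n)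
      - 2 * (if n < 2 then 0 else ∑ i ∈ range (n-2+1), ω 2 i * b (n-2-i))
      - (if n < 1 then 0 else ∑ i ∈ range (n-1+1), ω 1 i *
          (if (n-1-i) ≤ 1 then 0 else b (n-1-i))) = 0 := by
    apply hasSum_zero_unique (by norm_num : (0:ℝ) < 1/4)
    intro z hz
    have h1 := hasSum_shift 2 (hasSum_cauchy hg24 HT0 hz)
    have h1' := h1.mul_left 2
    have h2 := hasSum_shift 1 (hasSum_cauchy hg14 HT1 hz)
    have h0 := (HT2 z hz).mul_left 2
    have h3 := (h0.sub h1').sub h2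
    rw [show 2 * (f₂ z - z) - 2 * ((g 2 z * f₂ z) * z ^ 2) - (g 1 z * (f₂ z - z)) * z ^ 1 = 0 by
      linear_combination (hT z hz).2.1] at h3
    have he : (fun n => 2 * ((if n ≤ 2 then 0 else b n) * z ^ n)
        - 2 * ((if n < 2 then 0 else ∑ i ∈ range (n-2+1), ω 2 i * b (n-2-i)) * z ^ n)
        - (if n < 1 then 0 else ∑ i ∈ range (n-1+1), ω 1 i *
            (if (n-1-i) ≤ 1 then 0 else b (n-1-i))) * z ^ n)
        = fun n => (2 * (if n ≤ 2 then 0 else b n)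
        - 2 * (if n < 2 then 0 else ∑ i ∈ range (n-2+1), ω 2 i * b (n-2-i))
        - (if n < 1 then 0 else ∑ i ∈ range (n-1+1), ω 1 i *
            (if (n-1-i) ≤ 1 then 0 else b (n-1-i)))) * z ^ n := by
      funext n; ring
    rwa [he] at h3
  -- Family 3
  have Fam3 : ∀ n : ℕ, 3 * (if n ≤ 3 then 0 else b n)
      - 3 * (if n < 3 then 0 else ∑ i ∈ range (n-3+1), ω 3 i * b (n-3-i))
      - 2 * (if n < 2 then 0 else ∑ i ∈ range (n-2+1), ω 2 i *
          (if (n-2-i) ≤ 1 then 0 else b (n-2-i)))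
      - (if n < 1 then 0 else ∑ i ∈ range (n-1+1), ω 1 i *
          (if (n-1-i) ≤ 2 then 0 else b (n-1-i))) = 0 := by
    apply hasSum_zero_unique (by norm_num : (0:ℝ) < 1/4)
    intro z hz
    have h1 := (hasSum_shift 3 (hasSum_cauchy hg34 HT0 hz)).mul_left 3
    have h2 := (hasSum_shift 2 (hasSum_cauchy hg24 HT1 hz)).mul_left 2
    have h3 := hasSum_shift 1 (hasSum_cauchy hg14 HT2 hz)
    have h0 := (HT3 z hz).mul_left 3
    have h4 := ((h0.sub h1).sub h2).sub h3
    rw [show 3 * (f₂ z - z - b 3 * z^3) - 3 * ((g 3 z * f₂ z) * z ^ 3)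
        - 2 * ((g 2 z * (f₂ z - z)) * z ^ 2) - (g 1 z * (f₂ z - z)) * z ^ 1 = 0 by
      linear_combination (hT z hz).2.2] at h4
    have he : (fun n => 3 * ((if n ≤ 3 then 0 else b n) * z ^ n)
        - 3 * ((if n < 3 then 0 else ∑ i ∈ range (n-3+1), ω 3 i * b (n-3-i)) * z ^ n)
        - 2 * ((if n < 2 then 0 else ∑ i ∈ range (n-2+1), ω 2 i *
            (if (n-2-i) ≤ 1 then 0 else b (n-2-i))) * z ^ n)
        - (if n < 1 then 0 else ∑ i ∈ range (n-1+1), ω 1 i *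
            (if (n-1-i) ≤ 2 then 0 else b (n-1-i))) * z ^ n)
        = fun n => (3 * (if n ≤ 3 then 0 else b n)
        - 3 * (if n < 3 then 0 else ∑ i ∈ range (n-3+1), ω 3 i * b (n-3-i))
        - 2 * (if n < 2 then 0 else ∑ i ∈ range (n-2+1), ω 2 i *
            (if (n-2-i) ≤ 1 then 0 else b (n-2-i)))
        - (if n < 1 then 0 else ∑ i ∈ range (n-1+1), ω 1 i *
            (if (n-1-i) ≤ 2 then 0 else b (n-1-i)))) * z ^ n := by
      funext n; ring
    rwa [he] at h4
    -- instances
  have e13 := Fam1 3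
  have e15 := Fam1 5
  have e17 := Fam1 7
  have e23 := Fam2 3
  have e25 := Fam2 5
  have e27 := Fam2 7
  have e37 := Fam3 7
  have e39 := Fam3 9
  norm_num [Finset.sum_range_succ, hb0, hb1, hb2, hb4, hb6, hb8]
    at e13 e15 e17 e23 e25 e27 e37 e39
  have hs31 := hsym 3 1
  have hv11 : ω 1 1 = b 3 := by linear_combination -e13
  have hv13 : ω 1 3 = b 5 - b 3^2 := by linear_combination -e15 - b 3 * hv11
  have hv15 : ω 1 5 = b 7 - 2*b 3*b 5 + b 3^3 := by
    linear_combination -e17 - b 5 * hv11 - b 3 * hv13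
  have hv20 : ω 2 0 = b 3 := by linear_combination -e23/2
  have hv22 : ω 2 2 = b 5 - (3/2)*b 3^2 := by
    linear_combination -e25/2 - b 3 * hv20 - (b 3/2) * hv11
  have hv24 : ω 2 4 = b 7 - 3*b 3*b 5 + 2*b 3^3 := by
    linear_combination -e27/2 - b 5*hv20 - b 3*hv22 - (b 5/2)*hv11 - (b 3/2)*hv13
  have hv33 : ω 3 3 = b 7 - 3*b 3*b 5 + (7/3)*b 3^3 := by
    linear_combination -e37/3 - b 3*hs31 - b 3*hv13 - (2/3)*b 5*hv20 - (2/3)*b 3*hv22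
      - (1/3)*b 5*hv11 - (1/3)*b 3*hv13
  have hv35 : ω 3 5 = b 9 - 3*b 3*b 7 + 8*b 3^2*b 5 - 2*b 5^2 - 4*b 3^4 := by
    linear_combination -e39/3 - b 5*hs31 - b 5*hv13 - b 3*hv33
      - (2/3)*(b 7*hv20 + b 5*hv22 + b 3*hv24)
      - (1/3)*(b 7*hv11 + b 5*hv13 + b 3*hv15)
  constructor
  · rw [ha4, hv33, hv11, hv13]; ring
  · rw [ha5, hv35, hv33, hv11, hv13]; ring
end

section
/- The function Φ(u,v) = (1/√5)√(1−u²−3v²) + u³/6 on the domain Ω = {(u,v) : 0 ≤ u ≤ 1, 0 ≤ v ≤ (1/√3)√(1−u²)} attains its maximum value 1/√5. -/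
theorem stmt_11 :
    (∀ u v : ℝ, 0 ≤ u → u ≤ 1 → 0 ≤ v → v ≤ (1 / Real.sqrt 3) * Real.sqrt (1 - u ^ 2) →
      (1 / Real.sqrt 5) * Real.sqrt (1 - u ^ 2 - 3 * v ^ 2) + u ^ 3 / 6 ≤ 1 / Real.sqrt 5) ∧
    (∃ u v : ℝ, 0 ≤ u ∧ u ≤ 1 ∧ 0 ≤ v ∧ v ≤ (1 / Real.sqrt 3) * Real.sqrt (1 - u ^ 2) ∧
      (1 / Real.sqrt 5) * Real.sqrt (1 - u ^ 2 - 3 * v ^ 2) + u ^ 3 / 6 = 1 / Real.sqrt 5) := by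
  have h5 : (0:ℝ) < Real.sqrt 5 := Real.sqrt_pos.mpr (by norm_num)
  have h5sq : (Real.sqrt 5) ^ 2 = 5 := Real.sq_sqrt (by norm_num)
  have h5le : Real.sqrt 5 ≤ 3 := by nlinarith [h5sq, h5.le]
  constructor
  · intro u v hu hu1 hv hv2
    have hs : Real.sqrt (1 - u ^ 2 - 3 * v ^ 2) ≤ Real.sqrt (1 - u ^ 2) :=
      Real.sqrt_le_sqrt (by nlinarith)
    have hs2 : Real.sqrt (1 - u ^ 2) ≤ 1 - u ^ 2 / 2 := by
      rw [show (1 - u ^ 2 / 2) = Real.sqrt ((1 - u ^ 2 / 2) ^ 2) from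
        (Real.sqrt_sq (by nlinarith)).symm]
      exact Real.sqrt_le_sqrt (by nlinarith)
    have hs0 : 0 ≤ Real.sqrt (1 - u ^ 2 - 3 * v ^ 2) := Real.sqrt_nonneg _
    have key : Real.sqrt (1 - u ^ 2 - 3 * v ^ 2) + Real.sqrt 5 * (u ^ 3 / 6) ≤ 1 := by
      nlinarith [hs.trans hs2, mul_nonneg (mul_nonneg hu hu) hu]
    calc (1 / Real.sqrt 5) * Real.sqrt (1 - u ^ 2 - 3 * v ^ 2) + u ^ 3 / 6
        = (1 / Real.sqrt 5) * (Real.sqrt (1 - u ^ 2 - 3 * v ^ 2) + Real.sqrt 5 * (u ^ 3 / 6)) := by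
          field_simp
      _ ≤ (1 / Real.sqrt 5) * 1 := by
          apply mul_le_mul_of_nonneg_left key (by positivity)
      _ = 1 / Real.sqrt 5 := mul_one _
  · refine ⟨0, 0, le_refl 0, by norm_num, le_refl 0, ?_, ?_⟩
    · have : Real.sqrt (1 - (0:ℝ) ^ 2) = 1 := by norm_num
      rw [this]
      positivity
    · norm_num
end

section
/- The function Ψ(s,t) = (1/√7)√(1−s−3t) + t/2 + s²/12 on the domain {(s,t) : 0 ≤ s ≤ 1, 0 ≤ t ≤ (1−s)/3} attains its maximum value 1/√7, achieved at s=t=0. -/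
theorem stmt_12 :
    (∀ s t : ℝ, 0 ≤ s → s ≤ 1 → 0 ≤ t → t ≤ (1 - s) / 3 →
      (1 / Real.sqrt 7) * Real.sqrt (1 - s - 3 * t) + t / 2 + s ^ 2 / 12 ≤ 1 / Real.sqrt 7) ∧
    (1 / Real.sqrt 7) * Real.sqrt (1 - 0 - 3 * 0) + 0 / 2 + (0:ℝ) ^ 2 / 12 = 1 / Real.sqrt 7 := by
  constructor
  · intro s t hs hs1 ht ht3
    set a := Real.sqrt 7 with ha
    have ha0 : 0 < a := Real.sqrt_pos.mpr (by norm_num)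
    have ha2 : a ^ 2 = 7 := Real.sq_sqrt (by norm_num)
    have ha3 : a ≤ 3 := by nlinarith
    have hu : 0 ≤ 1 - s - 3 * t := by linarith
    set b := Real.sqrt (1 - s - 3 * t) with hb
    have hb0 : 0 ≤ b := Real.sqrt_nonneg _
    have hb2 : b ^ 2 = 1 - s - 3 * t := Real.sq_sqrt hu
    have key : b + a * t / 2 + a * s ^ 2 / 12 ≤ 1 := by
      nlinarith [sq_nonneg (b - 1), mul_nonneg (mul_nonneg ht hs) hs,
        mul_nonneg hs (sub_nonneg.mpr hs1), sq_nonneg s]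
    have heq : 1 / a * b + t / 2 + s ^ 2 / 12
        = (b + a * t / 2 + a * s ^ 2 / 12) / a := by
      field_simp
    rw [heq]
    gcongr
  · simp
end

section
/- Let ω₁₁, ω₁₃, ω₁₅, ω₁₇ ∈ ℂ with |ω₁₁| ≤ 1 and |ω₁₁|² + 3|ω₁₃|² + 5|ω₁₅|² + 7|ω₁₇|² ≤ 1. Then |ω₁₇| + |ω₁₃|²/2 + |ω₁₁|⁴/12 ≤ 1/√7. -/
theorem stmt_16 (ω₁₁ ω₁₃ ω₁₅ ω₁₇ : ℂ) (h1 : ‖ω₁₁‖ ≤ 1)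
    (h : ‖ω₁₁‖ ^ 2 + 3 * ‖ω₁₃‖ ^ 2 +
      5 * ‖ω₁₅‖ ^ 2 + 7 * ‖ω₁₇‖ ^ 2 ≤ 1) :
    ‖ω₁₇‖ + ‖ω₁₃‖ ^ 2 / 2 + ‖ω₁₁‖ ^ 4 / 12 ≤
      1 / Real.sqrt 7 := by
  set a := ‖ω₁₁‖ with ha
  set b := ‖ω₁₃‖ with hb
  set c := ‖ω₁₇‖ with hc
  have ha0 : 0 ≤ a := norm_nonneg _
  have hb0 : 0 ≤ b := norm_nonneg _
  have hc0 : 0 ≤ c := norm_nonneg _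
  have hd0 : 0 ≤ ‖ω₁₅‖ := norm_nonneg _
  have hkey : 7 * c ^ 2 ≤ 1 - (a ^ 2 + 3 * b ^ 2) := by nlinarith
  have ht0 : 0 ≤ a ^ 2 + 3 * b ^ 2 := by positivity
  have ht1 : a ^ 2 + 3 * b ^ 2 ≤ 1 := by nlinarith
  have hs : Real.sqrt 7 ^ 2 = 7 := Real.sq_sqrt (by norm_num)
  have hs2 : (2 : ℝ) ≤ Real.sqrt 7 := by
    nlinarith [Real.sqrt_nonneg 7, hs]
  have hs3 : Real.sqrt 7 ≤ 3 := by nlinarith [Real.sqrt_nonneg 7, hs]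
  have hsub : c ≤ 1 / Real.sqrt 7 - (a ^ 2 + 3 * b ^ 2) / 6 := by
    have hspos : (0 : ℝ) < Real.sqrt 7 := by linarith
    rw [div_sub_div _ _ (ne_of_gt hspos) (by norm_num : (6:ℝ) ≠ 0),
      le_div_iff₀ (by positivity)]
    nlinarith [sq_nonneg (6 - Real.sqrt 7 * (a ^ 2 + 3 * b ^ 2) - 6 * Real.sqrt 7 * c),
      mul_nonneg ht0 (sub_nonneg.2 hs3),
      mul_nonneg (mul_nonneg ht0 ht0) (sub_nonneg.2 hs3),
      mul_nonneg hc0 hspos.le]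
  nlinarith [sq_nonneg a, mul_le_one₀ h1 ha0 h1]
end

section
/- Let ω₁₁, ω₁₃, ω₁₅ ∈ ℂ with |ω₁₁|² + 3|ω₁₃|² + 5|ω₁₅|² ≤ 1. Then |ω₁₅| + |ω₁₁|³/6 ≤ 1/√5. -/
theorem stmt_17 (ω₁₁ ω₁₃ ω₁₅ : ℂ)
    (h : ‖ω₁₁‖ ^ 2 + 3 * ‖ω₁₃‖ ^ 2 + 5 * ‖ω₁₅‖ ^ 2 ≤ 1) :
    ‖ω₁₅‖ + ‖ω₁₁‖ ^ 3 / 6 ≤ 1 / Real.sqrt 5 := by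
  set a := ‖ω₁₁‖ with ha
  set c := ‖ω₁₅‖ with hc
  have ha0 : 0 ≤ a := norm_nonneg _
  have hc0 : 0 ≤ c := norm_nonneg _
  have hb0 : 0 ≤ ‖ω₁₃‖ ^ 2 := sq_nonneg _
  have key : a ^ 2 + 5 * c ^ 2 ≤ 1 := by nlinarith
  have ha1 : a ≤ 1 := by nlinarith
  have ha3 : a ^ 3 ≤ 1 - 5 * c ^ 2 := by nlinarith [sq_nonneg a, mul_nonneg (mul_nonneg ha0 ha0) ha0]
  have hs0 : (0:ℝ) < Real.sqrt 5 := Real.sqrt_pos.mpr (by norm_num)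
  have hs2 : Real.sqrt 5 ^ 2 = 5 := Real.sq_sqrt (by norm_num)
  have hs3 : Real.sqrt 5 ≤ 3 := by
    nlinarith [hs0, hs2]
  have hu : Real.sqrt 5 * c ≤ 1 := by nlinarith [hs2, mul_nonneg hs0.le hc0]
  rw [le_div_iff₀ hs0]
  nlinarith [mul_nonneg (sub_nonneg.mpr hu) (sub_nonneg.mpr hs3), hs2, ha3,
    mul_nonneg (mul_nonneg hs0.le hc0) hc0, sq_nonneg (Real.sqrt 5 * c - 1)]
end
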